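/- Let r: ℝ × ℝ^d × Θ → (0, 1] be the mixture responsibility function, Θ = ℝ^d × (0,1) × (0,∞). For every multi-index α in the parameters (μ₁,…,μ_d, p, σ²) and every compact K ⊂ Θ, there exists a polynomial P in d+1 variables such that |∂^α r(y, h, θ)| ≤ P(|y|, |h₁|, …, |h_d|) for all θ ∈ K, y ∈ ℝ, h ∈ ℝ^d. -/

import Mathlib

open Matrix

/-- The Gaussian density `N(y | m, s)` with mean `m` and variance `s`. -/
noncomputable def gaussPdf (y m s : ℝ) : ℝ :=
  (Real.sqrt (2 * Real.pi * s))⁻¹ * Real.exp (-((y - m) ^ 2) / (2 * s))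

/-- The EM responsibility function for the two-component mixture, as a function
of the parameter `θ = (μ, p, σ²)`. -/
noncomputable def respθ {d : ℕ} (y : ℝ) (h : Fin d → ℝ)
    (θ : (Fin d → ℝ) × ℝ × ℝ) : ℝ :=
  θ.2.1 * gaussPdf y (h ⬝ᵥ θ.1) θ.2.2 /
    (θ.2.1 * gaussPdf y (h ⬝ᵥ θ.1) θ.2.2 + (1 - θ.2.1) * gaussPdf y 0 θ.2.2)

/-! ### The logistic sigmoid and bounds on its derivatives -/

noncomputable def sigm (z : ℝ) : ℝ := (1 + Real.exp (-z))⁻¹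

lemma sigm_denom_pos (z : ℝ) : 0 < 1 + Real.exp (-z) := by positivity

lemma sigm_pos (z : ℝ) : 0 < sigm z := by
  unfold sigm; positivity

lemma sigm_lt_one (z : ℝ) : sigm z < 1 := by
  unfold sigm
  rw [inv_lt_one_iff₀]
  right
  linarith [Real.exp_pos (-z)]

lemma contDiff_sigm : ContDiff ℝ ⊤ sigm := by
  apply ContDiff.inv
  · exact contDiff_const.add (Real.contDiff_exp.comp contDiff_neg)
  · intro z; exact ne_of_gt (sigm_denom_pos z)

lemma hasDerivAt_sigm (z : ℝ) : HasDerivAt sigm (sigm z * (1 - sigm z)) z := by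
  have h1 : HasDerivAt (fun z : ℝ => 1 + Real.exp (-z)) (-Real.exp (-z)) z := by
    simpa using (((Real.hasDerivAt_exp (-z)).comp z (hasDerivAt_neg z)).const_add 1)
  have h2 := h1.inv (ne_of_gt (sigm_denom_pos z))
  refine HasDerivAt.congr_deriv h2 ?_
  have hne := ne_of_gt (sigm_denom_pos z)
  unfold sigm
  field_simp
  ring

lemma iteratedDeriv_sigm_poly (i : ℕ) :
    ∃ Q : Polynomial ℝ, ∀ z, iteratedDeriv i sigm z = Q.eval (sigm z) := by
  induction i with
  | zero => exact ⟨Polynomial.X, fun z => by simp⟩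
  | succ i ih =>
    obtain ⟨Q, hQ⟩ := ih
    refine ⟨Q.derivative * (Polynomial.X * (1 - Polynomial.X)), fun z => ?_⟩
    rw [iteratedDeriv_succ]
    have : iteratedDeriv i sigm = fun z => Q.eval (sigm z) := funext hQ
    rw [this]
    have h := (Q.hasDerivAt (sigm z)).comp z (hasDerivAt_sigm z)
    have h' : HasDerivAt (fun z => Q.eval (sigm z))
        (Polynomial.eval (sigm z) (Polynomial.derivative Q) * (sigm z * (1 - sigm z))) z := h
    rw [h'.deriv]
    simp [mul_comm]

lemma iteratedDeriv_sigm_bound (i : ℕ) :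
    ∃ M : ℝ, ∀ z, ‖iteratedFDeriv ℝ i sigm z‖ ≤ M := by
  obtain ⟨Q, hQ⟩ := iteratedDeriv_sigm_poly i
  obtain ⟨M, hM⟩ := (isCompact_Icc (a := (0:ℝ)) (b := 1)).exists_bound_of_continuousOn
    (Q.continuous_aeval.continuousOn)
  refine ⟨M, fun z => ?_⟩
  rw [norm_iteratedFDeriv_eq_norm_iteratedDeriv, hQ]
  have : sigm z ∈ Set.Icc (0:ℝ) 1 :=
    ⟨le_of_lt (sigm_pos z), le_of_lt (sigm_lt_one z)⟩
  simpa using hM _ this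

lemma sigm_deriv_bound (n : ℕ) :
    ∃ C : ℝ, 1 ≤ C ∧ ∀ i ≤ n, ∀ z, ‖iteratedFDeriv ℝ i sigm z‖ ≤ C := by
  induction n with
  | zero =>
    obtain ⟨M, hM⟩ := iteratedDeriv_sigm_bound 0
    exact ⟨max M 1, le_max_right _ _, fun i hi z => by
      interval_cases i; exact le_trans (hM z) (le_max_left _ _)⟩
  | succ n ih =>
    obtain ⟨C, hC1, hC⟩ := ih
    obtain ⟨M, hM⟩ := iteratedDeriv_sigm_bound (n + 1)
    refine ⟨max C M, le_trans hC1 (le_max_left _ _), fun i hi z => ?_⟩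
    rcases Nat.lt_succ_iff_lt_or_eq.mp (Nat.lt_succ_of_le hi) with h | h
    · exact le_trans (hC i (Nat.lt_succ_iff.mp h) z) (le_max_left _ _)
    · subst h; exact le_trans (hM z) (le_max_right _ _)

/-! ### Decomposition of the log-odds as a linear combination of basic functions -/

abbrev mixIdx (d : ℕ) := Unit ⊕ (Fin d ⊕ Fin d × Fin d)

/-- Basic parameter-dependent functions appearing in the log-odds. -/
noncomputable def baseFun (d : ℕ) : mixIdx d → ((Fin d → ℝ) × ℝ × ℝ) → ℝ
  | Sum.inl _ => fun θ => Real.log θ.2.1 - Real.log (1 - θ.2.1)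
  | Sum.inr (Sum.inl i) => fun θ => θ.1 i / θ.2.2
  | Sum.inr (Sum.inr ij) => fun θ => -(θ.1 ij.1 * θ.1 ij.2) / (2 * θ.2.2)

/-- Coefficients (depending only on `y` and `h`). -/
def coefFun {d : ℕ} (y : ℝ) (h : Fin d → ℝ) : mixIdx d → ℝ
  | Sum.inl _ => 1
  | Sum.inr (Sum.inl i) => y * h i
  | Sum.inr (Sum.inr ij) => h ij.1 * h ij.2

/-- The log-odds function. -/
noncomputable def logOdds {d : ℕ} (y : ℝ) (h : Fin d → ℝ)
    (θ : (Fin d → ℝ) × ℝ × ℝ) : ℝ :=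
  ∑ k : mixIdx d, (coefFun y h k • baseFun d k) θ

lemma logOdds_eq {d : ℕ} (y : ℝ) (h : Fin d → ℝ) (θ : (Fin d → ℝ) × ℝ × ℝ)
    (_hs : θ.2.2 ≠ 0) :
    logOdds y h θ = (Real.log θ.2.1 - Real.log (1 - θ.2.1))
      + y * (h ⬝ᵥ θ.1) / θ.2.2 - (h ⬝ᵥ θ.1) ^ 2 / (2 * θ.2.2) := by
  unfold logOdds
  rw [Fintype.sum_sum_type, Fintype.sum_sum_type]
  have h1 : ∑ i : Fin d, (coefFun y h (Sum.inr (Sum.inl i)) •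
      baseFun d (Sum.inr (Sum.inl i))) θ = y * (h ⬝ᵥ θ.1) / θ.2.2 := by
    simp only [coefFun, baseFun, Pi.smul_apply, smul_eq_mul, dotProduct]
    rw [Finset.mul_sum, Finset.sum_div]
    apply Finset.sum_congr rfl
    intro i _
    ring
  have h2 : ∑ ij : Fin d × Fin d, (coefFun y h (Sum.inr (Sum.inr ij)) •
      baseFun d (Sum.inr (Sum.inr ij))) θ = -((h ⬝ᵥ θ.1) ^ 2 / (2 * θ.2.2)) := by
    have key : ∑ x : Fin d × Fin d, (h x.1 * θ.1 x.1) * (h x.2 * θ.1 x.2)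
        = (h ⬝ᵥ θ.1) ^ 2 := by
      rw [Fintype.sum_prod_type, dotProduct, sq, Finset.sum_mul_sum]
    calc ∑ ij : Fin d × Fin d, (coefFun y h (Sum.inr (Sum.inr ij)) •
          baseFun d (Sum.inr (Sum.inr ij))) θ
        = ∑ x : Fin d × Fin d,
            -((h x.1 * θ.1 x.1) * (h x.2 * θ.1 x.2) / (2 * θ.2.2)) := by
          apply Finset.sum_congr rfl
          intro x _
          simp only [coefFun, baseFun, Pi.smul_apply, smul_eq_mul]
          ring
      _ = -((h ⬝ᵥ θ.1) ^ 2 / (2 * θ.2.2)) := by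
          rw [← key, Finset.sum_div, ← Finset.sum_neg_distrib]
  simp only [h1, h2]
  simp [coefFun, baseFun]
  ring

def mixU (d : ℕ) : Set ((Fin d → ℝ) × ℝ × ℝ) :=
  {θ | 0 < θ.2.1 ∧ θ.2.1 < 1 ∧ 0 < θ.2.2}

lemma isOpen_mixU (d : ℕ) : IsOpen (mixU d) := by
  have : mixU d = ((fun θ : (Fin d → ℝ) × ℝ × ℝ => θ.2.1) ⁻¹' Set.Ioo 0 1) ∩
      ((fun θ : (Fin d → ℝ) × ℝ × ℝ => θ.2.2) ⁻¹' Set.Ioi 0) := by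
    ext θ
    simp [mixU, Set.mem_Ioo, Set.mem_Ioi, and_assoc]
  rw [this]
  exact (isOpen_Ioo.preimage (by fun_prop)).inter (isOpen_Ioi.preimage (by fun_prop))

lemma contDiffOn_baseFun (d : ℕ) (k : mixIdx d) :
    ContDiffOn ℝ ⊤ (baseFun d k) (mixU d) := by
  intro θ hθ
  obtain ⟨hp, hp1, hσ⟩ := hθ
  apply ContDiffAt.contDiffWithinAt
  have hp' : Continuous fun θ : (Fin d → ℝ) × ℝ × ℝ => θ.2.1 := by fun_prop
  have hfst : ∀ i, ContDiffAt ℝ ⊤ (fun θ : (Fin d → ℝ) × ℝ × ℝ => θ.1 i) θ :=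
    fun i => (((ContinuousLinearMap.proj i : (Fin d → ℝ) →L[ℝ] ℝ).contDiff).comp
      contDiff_fst).contDiffAt
  have hsnd1 : ContDiffAt ℝ ⊤ (fun θ : (Fin d → ℝ) × ℝ × ℝ => θ.2.1) θ :=
    (contDiff_fst.comp contDiff_snd).contDiffAt
  have hsnd2 : ContDiffAt ℝ ⊤ (fun θ : (Fin d → ℝ) × ℝ × ℝ => θ.2.2) θ :=
    (contDiff_snd.comp contDiff_snd).contDiffAt
  match k with
  | Sum.inl _ =>
    exact ((Real.contDiffAt_log.2 hp.ne').comp θ hsnd1).sub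
      ((Real.contDiffAt_log.2 (by linarith : (1:ℝ) - θ.2.1 ≠ 0)).comp θ
        (contDiffAt_const.sub hsnd1))
  | Sum.inr (Sum.inl i) =>
    exact (hfst i).div hsnd2 hσ.ne'
  | Sum.inr (Sum.inr ij) =>
    exact (((hfst ij.1).mul (hfst ij.2)).neg).div (contDiffAt_const.mul hsnd2)
      (by positivity)

lemma resp_eq_sigm {d : ℕ} (y : ℝ) (h : Fin d → ℝ) (θ : (Fin d → ℝ) × ℝ × ℝ)
    (hθ : θ ∈ mixU d) : respθ y h θ = sigm (logOdds y h θ) := by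
  obtain ⟨hp, hp1, hσ⟩ := hθ
  have hp1' : (0:ℝ) < 1 - θ.2.1 := by linarith
  have hc : 0 < (Real.sqrt (2 * Real.pi * θ.2.2))⁻¹ := by
    rw [inv_pos]
    apply Real.sqrt_pos.2
    positivity
  have hg1 : 0 < gaussPdf y (h ⬝ᵥ θ.1) θ.2.2 := by
    unfold gaussPdf
    positivity
  have hg0 : 0 < gaussPdf y 0 θ.2.2 := by
    unfold gaussPdf
    positivity
  have ht := logOdds_eq y h θ hσ.ne'
  have key : (1 - θ.2.1) * gaussPdf y 0 θ.2.2 / (θ.2.1 * gaussPdf y (h ⬝ᵥ θ.1) θ.2.2)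
      = Real.exp (-(logOdds y h θ)) := by
    rw [ht]
    unfold gaussPdf
    have hexp : -(Real.log θ.2.1 - Real.log (1 - θ.2.1) + y * (h ⬝ᵥ θ.1) / θ.2.2
        - (h ⬝ᵥ θ.1) ^ 2 / (2 * θ.2.2))
        = (Real.log (1 - θ.2.1) - Real.log θ.2.1)
          + (-(y - 0) ^ 2 / (2 * θ.2.2) - -(y - (h ⬝ᵥ θ.1)) ^ 2 / (2 * θ.2.2)) := by
      field_simp
      ring
    rw [hexp, Real.exp_add, Real.exp_sub, Real.exp_sub, Real.exp_log hp1',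
      Real.exp_log hp]
    have h1 : θ.2.1 ≠ 0 := hp.ne'
    have h2 : (Real.sqrt (2 * Real.pi * θ.2.2))⁻¹ ≠ 0 := hc.ne'
    have h3 : Real.exp (-(y - (h ⬝ᵥ θ.1)) ^ 2 / (2 * θ.2.2)) ≠ 0 := (Real.exp_pos _).ne'
    field_simp
  rw [respθ]
  unfold sigm
  rw [← key, one_add_div (by positivity : θ.2.1 * gaussPdf y (h ⬝ᵥ θ.1) θ.2.2 ≠ 0),
    inv_div]

set_option maxHeartbeats 1000000 in
theorem resp_derivatives_polynomial_bound (d : ℕ) (n : ℕ)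
    (K : Set ((Fin d → ℝ) × ℝ × ℝ)) (hK : IsCompact K)
    (hKsub : K ⊆ {θ | 0 < θ.2.1 ∧ θ.2.1 < 1 ∧ 0 < θ.2.2}) :
    ∃ P : MvPolynomial (Fin (d + 1)) ℝ,
      ∀ θ ∈ K, ∀ (y : ℝ) (h : Fin d → ℝ),
        ‖iteratedFDeriv ℝ n (respθ y h) θ‖ ≤
          MvPolynomial.eval (Fin.cons |y| fun i => |h i|) P := by
  obtain ⟨Cσ, hCσ1, hCσ⟩ := sigm_deriv_bound n
  have hUopen := isOpen_mixU d
  have hUdiff : UniqueDiffOn ℝ (mixU d) := hUopen.uniqueDiffOn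
  have hKU : K ⊆ mixU d := hKsub
  have hbound : ∀ km : mixIdx d × Fin (n + 1), ∃ M : ℝ, ∀ θ ∈ K,
      ‖iteratedFDerivWithin ℝ km.2 (baseFun d km.1) (mixU d) θ‖ ≤ M := fun km =>
    hK.exists_bound_of_continuousOn
      (((contDiffOn_baseFun d km.1).continuousOn_iteratedFDerivWithin le_top hUdiff).mono hKU)
  choose M hM using hbound
  set C : ℝ := 1 + ∑ km : mixIdx d × Fin (n + 1), max (M km) 0 with hCdef
  have hsumM : (0:ℝ) ≤ ∑ km : mixIdx d × Fin (n + 1), max (M km) 0 :=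
    Finset.sum_nonneg fun km _ => le_max_right _ _
  have hC1 : (1:ℝ) ≤ C := by rw [hCdef]; linarith
  have hCb : ∀ (k : mixIdx d) (m : ℕ), m ≤ n → ∀ θ ∈ K,
      ‖iteratedFDerivWithin ℝ m (baseFun d k) (mixU d) θ‖ ≤ C := by
    intro k m hm θ hθ
    have h1 := hM (k, ⟨m, Nat.lt_succ_of_le hm⟩) θ hθ
    have h2 : M (k, ⟨m, Nat.lt_succ_of_le hm⟩) ≤
        ∑ km : mixIdx d × Fin (n + 1), max (M km) 0 :=
      le_trans (le_max_left _ _)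
        (Finset.single_le_sum (f := fun km => max (M km) 0)
          (fun i _ => le_max_right _ _) (Finset.mem_univ _))
    rw [hCdef]
    calc ‖iteratedFDerivWithin ℝ m (baseFun d k) (mixU d) θ‖
        ≤ M (k, ⟨m, Nat.lt_succ_of_le hm⟩) := h1
      _ ≤ 1 + ∑ km : mixIdx d × Fin (n + 1), max (M km) 0 := by linarith
  refine ⟨MvPolynomial.C (n.factorial * Cσ * (3 * C) ^ n) *
    (1 + MvPolynomial.X 0 + ∑ i : Fin d, MvPolynomial.X i.succ) ^ (2 * n), ?_⟩
  intro θ hθ y h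
  have hθU : θ ∈ mixU d := hKU hθ
  set S : ℝ := 1 + |y| + ∑ i : Fin d, |h i| with hSdef
  have hA0 : (0:ℝ) ≤ ∑ i : Fin d, |h i| := Finset.sum_nonneg fun i _ => abs_nonneg _
  have hS1 : (1:ℝ) ≤ S := by rw [hSdef]; have := abs_nonneg y; linarith
  set D : ℝ := 3 * C * S ^ 2 with hDdef
  have hD1 : (1:ℝ) ≤ D := by rw [hDdef]; nlinarith
  have heval : MvPolynomial.eval (Fin.cons |y| fun i => |h i| : Fin (d+1) → ℝ)
      (MvPolynomial.C (n.factorial * Cσ * (3 * C) ^ n) *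
        (1 + MvPolynomial.X 0 + ∑ i : Fin d, MvPolynomial.X i.succ) ^ (2 * n))
      = n.factorial * Cσ * (3 * C) ^ n * S ^ (2 * n) := by
    simp [hSdef, Fin.cons_zero, Fin.cons_succ]
  rw [heval]
  have hrw : iteratedFDeriv ℝ n (respθ y h) θ
      = iteratedFDerivWithin ℝ n (sigm ∘ logOdds y h) (mixU d) θ := by
    rw [← iteratedFDerivWithin_of_isOpen n hUopen hθU]
    exact iteratedFDerivWithin_congr (fun θ' hθ' => resp_eq_sigm y h θ' hθ') hθU n
  have hLsmooth : ContDiffOn ℝ ⊤ (logOdds y h) (mixU d) :=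
    ContDiffOn.sum fun k _ => (contDiffOn_baseFun d k).const_smul (coefFun y h k)
  have hLbound : ∀ i, 1 ≤ i → i ≤ n →
      ‖iteratedFDerivWithin ℝ i (logOdds y h) (mixU d) θ‖ ≤ D ^ i := by
    intro i hi1 hin
    have hsum : iteratedFDerivWithin ℝ i (logOdds y h) (mixU d) θ
        = ∑ k : mixIdx d,
            coefFun y h k • iteratedFDerivWithin ℝ i (baseFun d k) (mixU d) θ := by
      have hs1 := iteratedFDerivWithin_sum_apply (𝕜 := ℝ)
        (f := fun k : mixIdx d => coefFun y h k • baseFun d k) (u := Finset.univ)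
        (i := i) (x := θ) hUdiff hθU
        (fun k _ => (((contDiffOn_baseFun d k).const_smul (coefFun y h k)) θ hθU).of_le le_top)
      have hs2 : iteratedFDerivWithin ℝ i (logOdds y h) (mixU d) θ
          = ∑ k : mixIdx d,
              iteratedFDerivWithin ℝ i (coefFun y h k • baseFun d k) (mixU d) θ := by
          rw [show logOdds y h = ∑ k : mixIdx d, coefFun y h k • baseFun d k from
            funext fun θ' => (Finset.sum_apply θ' _ _).symm]
          exact hs1
      rw [hs2]
      exact Finset.sum_congr rfl fun k _ =>
        iteratedFDerivWithin_const_smul_apply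
          (((contDiffOn_baseFun d k) θ hθU).of_le le_top) hUdiff hθU
    have hnorm : ‖iteratedFDerivWithin ℝ i (logOdds y h) (mixU d) θ‖
        ≤ ∑ k : mixIdx d, |coefFun y h k| * C := by
      rw [hsum]
      refine le_trans (norm_sum_le _ _) (Finset.sum_le_sum fun k _ => ?_)
      refine le_trans (le_of_eq (norm_smul (coefFun y h k)
        (iteratedFDerivWithin ℝ i (baseFun d k) (mixU d) θ))) ?_
      rw [Real.norm_eq_abs]
      exact mul_le_mul_of_nonneg_left (hCb k i hin θ hθ) (abs_nonneg _)
    have hcoef : ∑ k : mixIdx d, |coefFun y h k| ≤ 3 * S ^ 2 := by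
      rw [Fintype.sum_sum_type, Fintype.sum_sum_type]
      have e1 : ∑ i : Fin d, |coefFun y h (Sum.inr (Sum.inl i))|
          = |y| * ∑ i : Fin d, |h i| := by
        rw [Finset.mul_sum]
        exact Finset.sum_congr rfl fun i _ => abs_mul y (h i)
      have e2 : ∑ ij : Fin d × Fin d, |coefFun y h (Sum.inr (Sum.inr ij))|
          = (∑ i : Fin d, |h i|) * ∑ i : Fin d, |h i| := by
        rw [Fintype.sum_prod_type, Finset.sum_mul_sum]
        exact Finset.sum_congr rfl fun i _ =>
          Finset.sum_congr rfl fun j _ => abs_mul (h i) (h j)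
      rw [e1, e2]
      have e0 : ∑ x : Unit, |coefFun y h (Sum.inl x)| = 1 := by
        simp [coefFun]
      rw [e0, hSdef]
      have hy := abs_nonneg y
      nlinarith [sq_nonneg (∑ i : Fin d, |h i|), sq_nonneg (|y| - ∑ i : Fin d, |h i|)]
    have hfinal : ‖iteratedFDerivWithin ℝ i (logOdds y h) (mixU d) θ‖ ≤ D := by
      refine le_trans hnorm ?_
      rw [← Finset.sum_mul, hDdef]
      calc (∑ k : mixIdx d, |coefFun y h k|) * C ≤ (3 * S ^ 2) * C :=
            mul_le_mul_of_nonneg_right hcoef (by linarith)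
        _ = 3 * C * S ^ 2 := by ring
    exact le_trans hfinal (le_self_pow₀ hD1 (by omega))
  have hcomp := norm_iteratedFDerivWithin_comp_le (g := sigm) (f := logOdds y h)
    (t := Set.univ) contDiff_sigm.contDiffOn hLsmooth le_top uniqueDiffOn_univ hUdiff
    (Set.mapsTo_univ _ _) hθU (C := Cσ) (D := D)
    (fun i hi => by rw [iteratedFDerivWithin_univ]; exact hCσ i hi _)
    hLbound
  rw [hrw]
  refine le_trans hcomp (le_of_eq ?_)
  rw [hDdef, mul_pow, pow_mul]
  ring
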